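/- Let γ, ρ : ℝⁿ → Matrix (Fin n) (Fin n) ℂ be differentiable matrix-valued functions such that ρ(A) is invertible for every A ∈ ℝⁿ. Then ρ satisfies the second master equation Σ_l (γ^j_l(A)·∂^l_A ρ^i_a(A) + ρ^l_a(A)·∂^i_A γ^j_l(A)) = 0 for all i,j,a and all A, if and only if the inverse matrix σ(A) = ρ(A)^{−1} satisfies Σ_i (γ^k_i(A)·∂^i_A σ^j_l(A) − σ^j_i(A)·∂^i_A γ^k_l(A)) = 0 for all j,k,l and all A. Here ∂^i_A denotes the partial derivative with respect to the i-th coordinate of A. -/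

import Mathlib

/-- Partial derivative with respect to the `i`-th coordinate of a complex-valued
function of `A ∈ ℝⁿ`. -/
noncomputable def pdC {n : ℕ} (i : Fin n) (g : (Fin n → ℝ) → ℂ) (A : Fin n → ℝ) : ℂ :=
  fderiv ℝ g A (Pi.single i 1)

lemma pdC_const {n : ℕ} (i : Fin n) (c : ℂ) (A : Fin n → ℝ) :
    pdC i (fun _ => c) A = 0 := by
  simp [pdC]

lemma pdC_sum {n : ℕ} {ι : Type*} (s : Finset ι) (i : Fin n)
    (f : ι → (Fin n → ℝ) → ℂ) (hf : ∀ m ∈ s, Differentiable ℝ (f m)) (A : Fin n → ℝ) :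
    pdC i (fun B => ∑ m ∈ s, f m B) A = ∑ m ∈ s, pdC i (f m) A := by
  unfold pdC
  rw [fderiv_fun_sum (fun m hm => (hf m hm).differentiableAt)]
  simp

lemma pdC_mul {n : ℕ} (i : Fin n) (f g : (Fin n → ℝ) → ℂ)
    (hf : Differentiable ℝ f) (hg : Differentiable ℝ g) (A : Fin n → ℝ) :
    pdC i (fun B => f B * g B) A = f A * pdC i g A + g A * pdC i f A := by
  unfold pdC
  rw [fderiv_fun_mul hf.differentiableAt hg.differentiableAt]
  simp [smul_eq_mul]

lemma diff_prod {n : ℕ} {ι : Type*} (s : Finset ι) (f : ι → (Fin n → ℝ) → ℂ)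
    (hf : ∀ m ∈ s, Differentiable ℝ (f m)) :
    Differentiable ℝ (fun A => ∏ m ∈ s, f m A) := by
  classical
  induction s using Finset.induction_on with
  | empty => simpa using differentiable_const (1 : ℂ)
  | insert a t hx ih =>
    simp only [Finset.prod_insert hx]
    exact (hf a (Finset.mem_insert_self a t)).mul
      (ih (fun m hm => hf m (Finset.mem_insert_of_mem hm)))

lemma diff_det {n : ℕ} (M : (Fin n → ℝ) → Matrix (Fin n) (Fin n) ℂ)
    (hM : ∀ a b, Differentiable ℝ (fun A => M A a b)) :
    Differentiable ℝ (fun A => (M A).det) := by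
  simp only [Matrix.det_apply]
  apply Differentiable.fun_sum
  intro σ _
  have h : Differentiable ℝ (fun A => ∏ p, M A (σ p) p) :=
    diff_prod Finset.univ _ (fun p _ => hM (σ p) p)
  simp only [Units.smul_def, zsmul_eq_mul]
  exact (differentiable_const _).mul h

lemma diff_inv_entry {n : ℕ} (ρ : (Fin n → ℝ) → Matrix (Fin n) (Fin n) ℂ)
    (hρdiff : ∀ i j, Differentiable ℝ (fun A => ρ A i j))
    (hρunit : ∀ A, IsUnit (ρ A)) (j l : Fin n) :
    Differentiable ℝ (fun A => (ρ A)⁻¹ j l) := by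
  have hdet : ∀ A, (ρ A).det ≠ 0 := fun A =>
    ((Matrix.isUnit_iff_isUnit_det _).mp (hρunit A)).ne_zero
  have h1 : Differentiable ℝ (fun A => ((ρ A).det)⁻¹) :=
    (diff_det ρ hρdiff).inv hdet
  have h2 : Differentiable ℝ (fun A => (ρ A).adjugate j l) := by
    simp only [Matrix.adjugate_apply]
    apply diff_det
    intro a b
    by_cases hab : a = l
    · subst hab; simp [Matrix.updateRow_apply]
    · simp only [Matrix.updateRow_apply, if_neg hab]
      exact hρdiff a b
  have : (fun A => (ρ A)⁻¹ j l) = fun A => ((ρ A).det)⁻¹ * (ρ A).adjugate j l := by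
    funext A
    rw [Matrix.inv_def]
    simp [Ring.inverse_eq_inv']
  rw [this]
  exact h1.mul h2


lemma pd_mul_one {n : ℕ} (M N : (Fin n → ℝ) → Matrix (Fin n) (Fin n) ℂ)
    (hM : ∀ a b, Differentiable ℝ (fun A => M A a b))
    (hN : ∀ a b, Differentiable ℝ (fun A => N A a b))
    (h1 : ∀ A, M A * N A = 1) (h2 : ∀ A, N A * M A = 1)
    (A : Fin n → ℝ) (i j l : Fin n) :
    pdC i (fun B => N B j l) A
      = -∑ p, ∑ q, N A j p * pdC i (fun B => M B p q) A * N A q l := by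
  have key : ∀ p q : Fin n, ∑ m, M A p m * pdC i (fun B => N B m q) A
      = -∑ m, pdC i (fun B => M B p m) A * N A m q := by
    intro p q
    have h0 : ∑ m, (M A p m * pdC i (fun B => N B m q) A
        + pdC i (fun B => M B p m) A * N A m q) = 0 := by
      calc ∑ m, (M A p m * pdC i (fun B => N B m q) A + pdC i (fun B => M B p m) A * N A m q)
          = ∑ m, pdC i (fun B => M B p m * N B m q) A := by
            refine Finset.sum_congr rfl (fun m _ => ?_)
            rw [pdC_mul i _ _ (hM p m) (hN m q)]; ring
        _ = pdC i (fun B => ∑ m, M B p m * N B m q) A :=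
            (pdC_sum Finset.univ i (fun m B => M B p m * N B m q)
              (fun m _ => (hM p m).mul (hN m q)) A).symm
        _ = pdC i (fun _ => (1 : Matrix (Fin n) (Fin n) ℂ) p q) A := by
            congr 1; funext B; rw [← Matrix.mul_apply, h1 B]
        _ = 0 := pdC_const ..
    rw [Finset.sum_add_distrib] at h0
    linear_combination h0
  have hNM : ∀ m : Fin n, (∑ p, N A j p * M A p m) = if j = m then (1:ℂ) else 0 := by
    intro m; rw [← Matrix.mul_apply, h2 A, Matrix.one_apply]
  calc pdC i (fun B => N B j l) A
      = ∑ m, (if j = m then (1:ℂ) else 0) * pdC i (fun B => N B m l) A := by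
        simp
    _ = ∑ m, (∑ p, N A j p * M A p m) * pdC i (fun B => N B m l) A := by
        refine Finset.sum_congr rfl (fun m _ => ?_); rw [hNM m]
    _ = ∑ p, N A j p * ∑ m, M A p m * pdC i (fun B => N B m l) A := by
        simp only [Finset.sum_mul, Finset.mul_sum]
        rw [Finset.sum_comm]
        exact Finset.sum_congr rfl fun p _ => Finset.sum_congr rfl fun m _ => by ring
    _ = ∑ p, N A j p * -∑ q, pdC i (fun B => M B p q) A * N A q l := by
        refine Finset.sum_congr rfl (fun p _ => ?_); rw [key p l]
    _ = -∑ p, ∑ q, N A j p * pdC i (fun B => M B p q) A * N A q l := by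
        simp only [Finset.mul_sum, mul_neg, ← Finset.sum_neg_distrib]
        exact Finset.sum_congr rfl fun p _ => Finset.sum_congr rfl fun q _ => by ring


/-- For differentiable matrix-valued functions `γ, ρ : ℝⁿ → Mat_n(ℂ)` with
`ρ(A)` invertible for every `A`, `ρ` satisfies the second master equation
`Σ_l (γ^j_l ∂^l_A ρ^i_a + ρ^l_a ∂^i_A γ^j_l) = 0` everywhere if and only if
`σ(A) = ρ(A)⁻¹` satisfies `Σ_i (γ^k_i ∂^i_A σ^j_l - σ^j_i ∂^i_A γ^k_l) = 0` everywhere. -/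
theorem second_master_iff_inverse (n : ℕ)
    (γ ρ : (Fin n → ℝ) → Matrix (Fin n) (Fin n) ℂ)
    (hγdiff : ∀ i j, Differentiable ℝ (fun A => γ A i j))
    (hρdiff : ∀ i j, Differentiable ℝ (fun A => ρ A i j))
    (hρunit : ∀ A, IsUnit (ρ A)) :
    (∀ A : Fin n → ℝ, ∀ i j a : Fin n,
        ∑ l, (γ A j l * pdC l (fun B => ρ B i a) A + ρ A l a * pdC i (fun B => γ B j l) A) = 0)
      ↔
    (∀ A : Fin n → ℝ, ∀ j k l : Fin n,
        ∑ i, (γ A k i * pdC i (fun B => (ρ B)⁻¹ j l) A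
            - (ρ A)⁻¹ j i * pdC i (fun B => γ B k l) A) = 0) := by
  have hdet : ∀ A, IsUnit (ρ A).det := fun A => (Matrix.isUnit_iff_isUnit_det _).mp (hρunit A)
  have h1 : ∀ A, ρ A * (ρ A)⁻¹ = 1 := fun A => Matrix.mul_nonsing_inv _ (hdet A)
  have h2 : ∀ A, (ρ A)⁻¹ * ρ A = 1 := fun A => Matrix.nonsing_inv_mul _ (hdet A)
  have hσdiff : ∀ j l, Differentiable ℝ (fun A => (ρ A)⁻¹ j l) :=
    diff_inv_entry ρ hρdiff hρunit
  constructor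
  · -- forward
    intro H1 A j k l
    have hDσ : ∀ i' : Fin n, pdC i' (fun B => (ρ B)⁻¹ j l) A
        = -∑ p, ∑ q, (ρ A)⁻¹ j p * pdC i' (fun B => ρ B p q) A * (ρ A)⁻¹ q l :=
      fun i' => pd_mul_one ρ (fun B => (ρ B)⁻¹) hρdiff hσdiff h1 h2 A i' j l
    have key1 : ∀ p q : Fin n, ∑ m, γ A k m * pdC m (fun B => ρ B p q) A
        = -∑ m, ρ A m q * pdC p (fun B => γ B k m) A := by
      intro p q
      have := H1 A p k q
      rw [Finset.sum_add_distrib] at this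
      linear_combination this
    have delta : ∀ m : Fin n, (∑ q, ρ A m q * (ρ A)⁻¹ q l) = if m = l then (1:ℂ) else 0 := by
      intro m; rw [← Matrix.mul_apply, h1 A, Matrix.one_apply]
    rw [Finset.sum_sub_distrib, sub_eq_zero]
    calc ∑ i, γ A k i * pdC i (fun B => (ρ B)⁻¹ j l) A
        = ∑ i, ∑ p, ∑ q, (ρ A)⁻¹ j p * (ρ A)⁻¹ q l
            * -(γ A k i * pdC i (fun B => ρ B p q) A) := by
          refine Finset.sum_congr rfl fun i _ => ?_
          rw [hDσ i]
          simp only [mul_neg, Finset.mul_sum, ← Finset.sum_neg_distrib]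
          exact Finset.sum_congr rfl fun p _ => Finset.sum_congr rfl fun q _ => by ring
      _ = ∑ p, ∑ q, (ρ A)⁻¹ j p * (ρ A)⁻¹ q l
            * -(∑ i, γ A k i * pdC i (fun B => ρ B p q) A) := by
          rw [Finset.sum_comm]
          refine Finset.sum_congr rfl fun p _ => ?_
          rw [Finset.sum_comm]
          refine Finset.sum_congr rfl fun q _ => ?_
          simp only [mul_neg, ← Finset.sum_neg_distrib, Finset.mul_sum]
      _ = ∑ p, ∑ q, (ρ A)⁻¹ j p * (ρ A)⁻¹ q l
            * (∑ m, ρ A m q * pdC p (fun B => γ B k m) A) := by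
          refine Finset.sum_congr rfl fun p _ => Finset.sum_congr rfl fun q _ => ?_
          rw [key1 p q, neg_neg]
      _ = ∑ p, (ρ A)⁻¹ j p
            * ∑ m, pdC p (fun B => γ B k m) A * (∑ q, ρ A m q * (ρ A)⁻¹ q l) := by
          refine Finset.sum_congr rfl fun p _ => ?_
          simp only [Finset.mul_sum, Finset.sum_mul]
          rw [Finset.sum_comm]
          exact Finset.sum_congr rfl fun q _ => Finset.sum_congr rfl fun m _ => by ring
      _ = ∑ i, (ρ A)⁻¹ j i * pdC i (fun B => γ B k l) A := by
          refine Finset.sum_congr rfl fun p _ => ?_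
          congr 1
          simp [delta, mul_ite]
  · -- backward
    intro H2 A i j a
    have hDρ : ∀ m p q : Fin n, pdC m (fun B => ρ B p q) A
        = -∑ u, ∑ v, ρ A p u * pdC m (fun B => (ρ B)⁻¹ u v) A * ρ A v q :=
      fun m p q => pd_mul_one (fun B => (ρ B)⁻¹) ρ hσdiff hρdiff h2 h1 A m p q
    have key2 : ∀ p q : Fin n, ∑ m, γ A j m * pdC m (fun B => (ρ B)⁻¹ p q) A
        = ∑ m, (ρ A)⁻¹ p m * pdC m (fun B => γ B j q) A := by
      intro p q
      have := H2 A p j q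
      rw [Finset.sum_sub_distrib, sub_eq_zero] at this
      exact this
    have delta2 : ∀ m : Fin n, (∑ p, ρ A i p * (ρ A)⁻¹ p m) = if i = m then (1:ℂ) else 0 := by
      intro m; rw [← Matrix.mul_apply, h1 A, Matrix.one_apply]
    rw [Finset.sum_add_distrib]
    have main : ∑ m, γ A j m * pdC m (fun B => ρ B i a) A
        = -∑ m, ρ A m a * pdC i (fun B => γ B j m) A := by
      calc ∑ m, γ A j m * pdC m (fun B => ρ B i a) A
          = ∑ m, ∑ p, ∑ q, ρ A i p * ρ A q a
              * -(γ A j m * pdC m (fun B => (ρ B)⁻¹ p q) A) := by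
            refine Finset.sum_congr rfl fun m _ => ?_
            rw [hDρ m i a]
            simp only [mul_neg, Finset.mul_sum, ← Finset.sum_neg_distrib]
            exact Finset.sum_congr rfl fun p _ => Finset.sum_congr rfl fun q _ => by ring
        _ = ∑ p, ∑ q, ρ A i p * ρ A q a
              * -(∑ m, γ A j m * pdC m (fun B => (ρ B)⁻¹ p q) A) := by
            rw [Finset.sum_comm]
            refine Finset.sum_congr rfl fun p _ => ?_
            rw [Finset.sum_comm]
            refine Finset.sum_congr rfl fun q _ => ?_
            simp only [mul_neg, ← Finset.sum_neg_distrib, Finset.mul_sum]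
        _ = ∑ p, ∑ q, ρ A i p * ρ A q a
              * -(∑ m, (ρ A)⁻¹ p m * pdC m (fun B => γ B j q) A) := by
            refine Finset.sum_congr rfl fun p _ => Finset.sum_congr rfl fun q _ => ?_
            rw [key2 p q]
        _ = ∑ q, ρ A q a
              * -(∑ m, (∑ p, ρ A i p * (ρ A)⁻¹ p m) * pdC m (fun B => γ B j q) A) := by
            rw [Finset.sum_comm]
            refine Finset.sum_congr rfl fun q _ => ?_
            simp only [mul_neg, ← Finset.sum_neg_distrib, Finset.mul_sum, Finset.sum_mul]
            rw [Finset.sum_comm]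
            exact Finset.sum_congr rfl fun m _ => Finset.sum_congr rfl fun p _ => by ring
        _ = ∑ q, ρ A q a * -(pdC i (fun B => γ B j q) A) := by
            refine Finset.sum_congr rfl fun q _ => ?_
            congr 2
            simp [delta2, ite_mul]
        _ = -∑ m, ρ A m a * pdC i (fun B => γ B j m) A := by
            simp only [mul_neg, ← Finset.sum_neg_distrib]
    rw [main]
    ring
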